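/- Let a, b : ℝ → ℝ be continuous, define M(t) = exp(∫₀ᵗ a(τ) dτ) and N(t) = ∫₀ᵗ b(τ)/M(τ) dτ, and let F : ℝ → ℝ be twice differentiable with F''(ξ) ≠ 0 for all ξ. Define the Lagrangian L(x, v, t) = M(t)·F(v/M(t) − N(t)). Then a twice differentiable curve x : ℝ → ℝ satisfies the Euler–Lagrange equation of L if and only if x''(t) = a(t)·x'(t) + b(t) for all t ∈ ℝ. In particular, the equation ẍ = a(t)ẋ + b(t) admits infinitely many Lagrangian formulations, one for each such F. -/

import Mathlib

/-- Partial derivative of the Lagrangian `L x v t` in the velocity argument. -/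
noncomputable def pv (L : ℝ → ℝ → ℝ → ℝ) (x v t : ℝ) : ℝ := deriv (fun w => L x w t) v

/-- Partial derivative of the Lagrangian `L x v t` in the position argument. -/
noncomputable def px (L : ℝ → ℝ → ℝ → ℝ) (x v t : ℝ) : ℝ := deriv (fun y => L y v t) x

/-- A curve `x` satisfies the Euler–Lagrange equation of `L`:
`(d/dt)[(∂L/∂v)(x t, x' t, t)] = (∂L/∂x)(x t, x' t, t)` for all `t`. -/
def SatisfiesEL (L : ℝ → ℝ → ℝ → ℝ) (x : ℝ → ℝ) : Prop :=
  ∀ t : ℝ, deriv (fun s => pv L (x s) (deriv x s) s) t = px L (x t) (deriv x t) t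

/-- Partial derivative of `f (x, t)` in the first argument. -/
noncomputable def pd1 (f : ℝ × ℝ → ℝ) (x t : ℝ) : ℝ := deriv (fun y => f (y, t)) x

/-- Partial derivative of `f (x, t)` in the second argument. -/
noncomputable def pd2 (f : ℝ × ℝ → ℝ) (x t : ℝ) : ℝ := deriv (fun s => f (x, s)) t

theorem family_of_lagrangians_for_linear_equation
    (a b : ℝ → ℝ) (ha : Continuous a) (hb : Continuous b)
    (M N : ℝ → ℝ)
    (hM : ∀ t : ℝ, M t = Real.exp (∫ τ in (0:ℝ)..t, a τ))
    (hN : ∀ t : ℝ, N t = ∫ τ in (0:ℝ)..t, b τ / M τ)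
    (F : ℝ → ℝ) (hF : Differentiable ℝ F) (hF' : Differentiable ℝ (deriv F))
    (hF'' : ∀ ξ : ℝ, deriv (deriv F) ξ ≠ 0)
    (L : ℝ → ℝ → ℝ → ℝ)
    (hL : ∀ x v t : ℝ, L x v t = M t * F (v / M t - N t))
    (x : ℝ → ℝ) (hx : Differentiable ℝ x) (hx' : Differentiable ℝ (deriv x)) :
    SatisfiesEL L x ↔
      ∀ t : ℝ, deriv (deriv x) t = a t * deriv x t + b t := by
    -- basic facts about M and N
  have hMpos : ∀ t : ℝ, 0 < M t := fun t => by rw [hM]; exact Real.exp_pos _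
  have hMne : ∀ t : ℝ, M t ≠ 0 := fun t => (hMpos t).ne'
  have hIa : ∀ t : ℝ, HasDerivAt (fun t => ∫ τ in (0:ℝ)..t, a τ) (a t) t := fun t =>
    intervalIntegral.integral_hasDerivAt_right (ha.intervalIntegrable _ _)
      (ha.stronglyMeasurableAtFilter _ _) ha.continuousAt
  have hMd : ∀ t : ℝ, HasDerivAt M (a t * M t) t := by
    intro t
    have hMeq : M = fun t => Real.exp (∫ τ in (0:ℝ)..t, a τ) := funext hM
    have := (hIa t).exp
    rw [← hMeq] at this
    simpa [hM t, mul_comm] using this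
  have hMc : Continuous M := by
    have : Differentiable ℝ M := fun t => (hMd t).differentiableAt
    exact this.continuous
  have hq : Continuous (fun τ => b τ / M τ) := hb.div hMc hMne
  have hNd : ∀ t : ℝ, HasDerivAt N (b t / M t) t := by
    intro t
    have hNeq : N = fun t => ∫ τ in (0:ℝ)..t, b τ / M τ := funext hN
    have := intervalIntegral.integral_hasDerivAt_right (hq.intervalIntegrable 0 t)
      (hq.stronglyMeasurableAtFilter _ _) hq.continuousAt
    rwa [← hNeq] at this
  set g : ℝ → ℝ := fun s => deriv x s / M s - N s with hg
  have hgd : ∀ t : ℝ, HasDerivAt g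
      ((deriv (deriv x) t - a t * deriv x t - b t) / M t) t := by
    intro t
    have h1 : HasDerivAt (fun s => deriv x s / M s)
        ((deriv (deriv x) t * M t - deriv x t * (a t * M t)) / (M t)^2) t :=
      ((hx' t).hasDerivAt).div (hMd t) (hMne t)
    have h2 := h1.sub (hNd t)
    refine h2.congr_deriv ?_
    field_simp [hMne t]
  have hpv : ∀ X v t : ℝ, pv L X v t = deriv F (v / M t - N t) := by
    intro X v t
    have hid : HasDerivAt (fun w : ℝ => w / M t - N t) (1 / M t) v :=
      ((hasDerivAt_id v).div_const (M t)).sub_const (N t)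
    have hc : HasDerivAt (fun w => F (w / M t - N t))
        (deriv F (v / M t - N t) * (1 / M t)) v :=
      ((hF _).hasDerivAt).comp v hid
    have hc2 : HasDerivAt (fun w => M t * F (w / M t - N t))
        (M t * (deriv F (v / M t - N t) * (1 / M t))) v := hc.const_mul (M t)
    have : pv L X v t = M t * (deriv F (v / M t - N t) * (1 / M t)) := by
      unfold pv
      have : (fun w => L X w t) = fun w => M t * F (w / M t - N t) := funext fun w => hL X w t
      rw [this, hc2.deriv]
    rw [this]
    field_simp
    exact mul_div_cancel_left₀ _ (hMne t)
  have hpx : ∀ X v t : ℝ, px L X v t = 0 := by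
    intro X v t
    unfold px
    have : (fun y => L y v t) = fun _ => M t * F (v / M t - N t) := funext fun y => hL y v t
    rw [this, deriv_const']
  have hfun : (fun s => pv L (x s) (deriv x s) s) = fun s => deriv F (g s) :=
    funext fun s => hpv (x s) (deriv x s) s
  have hcomp : ∀ t : ℝ, HasDerivAt (fun s => deriv F (g s))
      (deriv (deriv F) (g t) * ((deriv (deriv x) t - a t * deriv x t - b t) / M t)) t :=
    fun t => ((hF' (g t)).hasDerivAt).comp t (hgd t)
  constructor
  · intro hEL t
    have h := hEL t
    rw [hfun, hpx, (hcomp t).deriv] at h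
    rcases mul_eq_zero.mp h with h' | h'
    · exact absurd h' (hF'' _)
    · have := (div_eq_zero_iff.mp h').resolve_right (hMne t)
      linarith
  · intro hode t
    rw [hfun, hpx, (hcomp t).deriv]
    have : deriv (deriv x) t - a t * deriv x t - b t = 0 := by
      have := hode t; linarith
    rw [this]
    simp
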